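/- For every real number α with 0 < α < 2 and α ≠ 1, the quantity (2^(1-α) + α - 2)/(1 - α) is strictly negative. -/

import Mathlib

theorem stmt_0 (α : ℝ) (h0 : 0 < α) (h2 : α < 2) (h1 : α ≠ 1) :
    ((2:ℝ) ^ (1 - α) + α - 2) / (1 - α) < 0 := by
  set t : ℝ := 1 - α with ht
  have h2t : (2:ℝ) ^ t = Real.exp (Real.log 2 * t) := by
    rw [Real.rpow_def_of_pos (by norm_num)]
  have hconv := strictConvexOn_exp.2
  rcases lt_or_gt_of_ne (sub_ne_zero_of_ne (Ne.symm h1)) with hneg | hpos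
  · -- t < 0, numerator positive, denominator negative
    have ht1 : -1 < t := by simp [ht]; linarith
    have hb : (0:ℝ) < -t / (1 - t) := by
      apply div_pos <;> linarith
    have ha : (0:ℝ) < 1 / (1 - t) := by
      apply div_pos <;> linarith
    have hne : (1 - t) ≠ 0 := by intro h; simp [ht] at h; linarith
    have key := hconv (Set.mem_univ (Real.log 2 * t)) (Set.mem_univ (Real.log 2))
      (by intro h; have := Real.log_pos (by norm_num : (1:ℝ) < 2); nlinarith [mul_lt_of_lt_one_right this (show t < 1 by linarith)]) ha hb
      (by field_simp; ring)
    rw [show (1 / (1 - t)) • (Real.log 2 * t) + (-t / (1 - t)) • Real.log 2 = 0 by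
      simp only [smul_eq_mul]; field_simp; ring] at key
    simp only [smul_eq_mul, Real.exp_zero, Real.exp_log (by norm_num : (0:ℝ) < 2)] at key
    rw [← h2t] at key
    have hnum : 0 < (2:ℝ) ^ t + α - 2 := by
      have h1t : (0:ℝ) < 1 - t := by linarith
      field_simp at key
      simp only [ht] at key ⊢
      nlinarith
    exact div_neg_of_pos_of_neg hnum hneg
  · -- t > 0, numerator negative, denominator positive
    have ht1 : t < 1 := by simp [ht]; linarith
    have key := hconv (Set.mem_univ 0) (Set.mem_univ (Real.log 2))
      (by positivity) (by linarith : (0:ℝ) < 1 - t) (by linarith : (0:ℝ) < t) (by ring)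
    simp only [smul_eq_mul, mul_zero, zero_add, Real.exp_zero, mul_one,
      Real.exp_log (by norm_num : (0:ℝ) < 2)] at key
    rw [mul_comm t (Real.log 2), ← h2t] at key
    have hnum : (2:ℝ) ^ t + α - 2 < 0 := by nlinarith
    exact div_neg_of_neg_of_pos hnum hpos
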